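/- The characteristic polynomial of the Jacobian matrix of the autonomous SIRS system at the disease-free equilibrium (N,0,0) factors as (λ + d + σ)(λ² - a₁λ + a₀), where a₀ = (d+r_a)(d+r_s)(1 - R0) and a₁ = (μβN - (d+r_a)) + (α(1-μ)βN - (d+r_s)), with R0 = βN(μ/(d+r_a) + α(1-μ)/(d+r_s)). -/

import Mathlib

set_option maxHeartbeats 2000000
open ContinuousLinearMap

/-- The characteristic polynomial of the Jacobian of the autonomous
SIRS system at the disease-free equilibrium (N,0,0) factors as
(λ + d + σ)(λ² - a₁λ + a₀). The Jacobian is the matrix of partial derivatives of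
the vector field at (N,0,0). -/
theorem charpoly_at_disease_free
    (d σ β N ra rs α μ : ℝ)
    (hd : 0 < d) (hσ : 0 < σ) (hβ : 0 < β) (hN : 0 < N)
    (hra : 0 < ra) (hrs : 0 < rs)
    (hα0 : 0 ≤ α) (hα1 : α ≤ 1) (hμ0 : 0 ≤ μ) (hμ1 : μ ≤ 1) :
    let f : (Fin 3 → ℝ) → (Fin 3 → ℝ) := fun x =>
      ![ (d + σ) * (N - x 0) - β * x 0 * (x 1 + α * x 2) - σ * (x 1 + x 2),
         μ * β * x 0 * (x 1 + α * x 2) - (d + ra) * x 1,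
         (1 - μ) * β * x 0 * (x 1 + α * x 2) - (d + rs) * x 2 ]
    let J : Matrix (Fin 3) (Fin 3) ℝ := fun i j =>
      fderiv ℝ f ![N, 0, 0] (Pi.single j 1) i
    let R0 : ℝ := β * N * (μ / (d + ra) + α * (1 - μ) / (d + rs))
    let a0 : ℝ := (d + ra) * (d + rs) * (1 - R0)
    let a1 : ℝ := (μ * β * N - (d + ra)) + (α * (1 - μ) * β * N - (d + rs))
    ∀ lam : ℝ,
      Matrix.det (lam • (1 : Matrix (Fin 3) (Fin 3) ℝ) - J)
        = (lam + d + σ) * (lam ^ 2 - a1 * lam + a0) := by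
  intro f J R0 a0 a1 lam
  set p : Fin 3 → ℝ := ![N, 0, 0] with hp
  have hp0 : p 0 = N := rfl
  have hp1 : p 1 = 0 := rfl
  have hp2 : p 2 = 0 := rfl
  set M : Matrix (Fin 3) (Fin 3) ℝ :=
    !![-(d+σ), -(β*N+σ), -(α*β*N+σ);
       0, μ*β*N-(d+ra), μ*β*N*α;
       0, (1-μ)*β*N, (1-μ)*β*N*α-(d+rs)] with hM
  set L : (Fin 3 → ℝ) →L[ℝ] (Fin 3 → ℝ) :=
    LinearMap.toContinuousLinearMap M.mulVecLin with hL
  have hx : ∀ j : Fin 3, HasFDerivAt (fun x : Fin 3 → ℝ => x j)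
      ((ContinuousLinearMap.proj j : (Fin 3 → ℝ) →L[ℝ] ℝ)) p := fun j => hasFDerivAt_apply (𝕜 := ℝ) j p
  have hf : HasFDerivAt f L p := by
    apply hasFDerivAt_pi''
    intro i
    fin_cases i
    · have h : HasFDerivAt (fun x : Fin 3 → ℝ =>
          (d + σ) * (N - x 0) - β * x 0 * (x 1 + α * x 2) - σ * (x 1 + x 2)) _ p :=
        ((((hx 0).const_sub N).const_mul (d+σ)).sub
          ((((hx 0).const_mul β).mul ((hx 1).add ((hx 2).const_mul α))))).sub
          (((hx 1).add (hx 2)).const_mul σ)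
      refine h.congr_fderiv ?_
      ext v
      simp [hL, hM, Matrix.mulVec, dotProduct, Fin.sum_univ_three, hp0, hp1, hp2]
      ring
    · have h : HasFDerivAt (fun x : Fin 3 → ℝ =>
          μ * β * x 0 * (x 1 + α * x 2) - (d + ra) * x 1) _ p :=
        (((hx 0).const_mul (μ*β)).mul ((hx 1).add ((hx 2).const_mul α))).sub
          ((hx 1).const_mul (d+ra))
      refine h.congr_fderiv ?_
      ext v
      simp [hL, hM, Matrix.mulVec, dotProduct, Fin.sum_univ_three, hp0, hp1, hp2]
      ring
    · have h : HasFDerivAt (fun x : Fin 3 → ℝ =>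
          (1 - μ) * β * x 0 * (x 1 + α * x 2) - (d + rs) * x 2) _ p :=
        (((hx 0).const_mul ((1-μ)*β)).mul ((hx 1).add ((hx 2).const_mul α))).sub
          ((hx 2).const_mul (d+rs))
      refine h.congr_fderiv ?_
      ext v
      simp [hL, hM, Matrix.mulVec, dotProduct, Fin.sum_univ_three, hp0, hp1, hp2]
      ring
  have hJ : J = M := by
    funext i j
    show fderiv ℝ f p (Pi.single j 1) i = M i j
    rw [hf.fderiv]
    simp [hL, Matrix.mulVec_single]
  rw [hJ]
  rw [Matrix.det_fin_three]
  have hra' : (d + ra) ≠ 0 := by positivity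
  have hrs' : (d + rs) ≠ 0 := by positivity
  simp only [Matrix.sub_apply, Matrix.smul_apply, Matrix.one_apply, hM, a0, a1, R0,
    Matrix.cons_val', Matrix.cons_val_zero, Matrix.cons_val_one, Matrix.head_cons,
    Matrix.cons_val_fin_one, Matrix.empty_val', Matrix.head_fin_const, Matrix.cons_val_two,
    Matrix.tail_cons, smul_eq_mul]
  simp [Matrix.one_apply, Matrix.vecHead, Matrix.vecTail, Fin.ext_iff]
  field_simp
  ring
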